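/- Let A = 1 and B = 1, and let (x_n)_{n ≥ −9} satisfy x_{n+1} = x_{n−9}/(1 + x_{n−1}·x_{n−3}·x_{n−5}·x_{n−7}·x_{n−9}) with nonzero terms and denominators. Set a_j = x_{−j} for j = 0,...,9, M_j = 5 − ⌊j/2⌋, and P_j = ∏_{k=0}^{4} a_{(j mod 2) + 2k}. Then x_{10n−j} = a_j · ∏_{s=0}^{n−1} (1 + (5s + M_j − 1)·P_j)/(1 + (5s + M_j)·P_j) for all n ≥ 0 and j ∈ {0,...,9}. -/

import Mathlib

noncomputable def zf (x : ℤ → ℝ) (m : ℤ) : ℝ :=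
  x m * x (m-2) * x (m-4) * x (m-6) * x (m-8)

lemma zf_ne (x : ℤ → ℝ)
    (hden : ∀ n : ℤ, 0 ≤ n →
      1 + x (n-1) * x (n-3) * x (n-5) * x (n-7) * x (n-9) ≠ 0)
    (m : ℤ) (hm : -1 ≤ m) : 1 + zf x m ≠ 0 := by
  have h := hden (m+1) (by omega)
  simp only [show m+1-1 = m from by ring, show m+1-3 = m-2 from by ring,
    show m+1-5 = m-4 from by ring, show m+1-7 = m-6 from by ring,
    show m+1-9 = m-8 from by ring] at h
  exact h

lemma zf_rec (x : ℤ → ℝ)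
    (hrec : ∀ n : ℤ, 0 ≤ n →
      x (n + 1) = x (n - 9) / (1 + x (n-1) * x (n-3) * x (n-5) * x (n-7) * x (n-9)))
    (m : ℤ) (hm : -1 ≤ m) : zf x (m+2) = zf x m / (1 + zf x m) := by
  have h := hrec (m+1) (by omega)
  simp only [show m+1+1 = m+2 from by ring, show m+1-1 = m from by ring,
    show m+1-3 = m-2 from by ring, show m+1-5 = m-4 from by ring,
    show m+1-7 = m-6 from by ring, show m+1-9 = m-8 from by ring] at h
  unfold zf
  simp only [show m+2-2 = m from by ring, show m+2-4 = m-2 from by ring,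
    show m+2-6 = m-4 from by ring, show m+2-8 = m-6 from by ring]
  rw [h]
  ring

lemma zf_closed (x : ℤ → ℝ)
    (hden : ∀ n : ℤ, 0 ≤ n →
      1 + x (n-1) * x (n-3) * x (n-5) * x (n-7) * x (n-9) ≠ 0)
    (hrec : ∀ n : ℤ, 0 ≤ n →
      x (n + 1) = x (n - 9) / (1 + x (n-1) * x (n-3) * x (n-5) * x (n-7) * x (n-9)))
    (m0 : ℤ) (h0 : -1 ≤ m0) :
    ∀ t : ℕ, (1 + (t:ℝ) * zf x m0 ≠ 0) ∧
      zf x (m0 + 2*t) = zf x m0 / (1 + (t:ℝ) * zf x m0) := by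
  intro t
  induction t with
  | zero => simp
  | succ t ih =>
    obtain ⟨h1, h2⟩ := ih
    have hm : -1 ≤ m0 + 2*(t:ℤ) := by omega
    have hr := zf_rec x hrec (m0+2*t) hm
    have hd := zf_ne x hden (m0+2*t) hm
    rw [h2] at hr hd
    set Q := zf x m0 with hQdef
    have key : 1 + Q/(1+(t:ℝ)*Q) = (1 + ((t:ℝ)+1)*Q)/(1+(t:ℝ)*Q) := by
      rw [eq_div_iff h1, add_mul, div_mul_cancel₀ _ h1]
      try ring
    rw [key] at hr hd
    have h3 : 1 + ((t:ℝ)+1)*Q ≠ 0 := by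
      intro hc
      exact hd (by rw [hc]; simp)
    constructor
    · push_cast; convert h3 using 2 <;> try ring
    · push_cast
      rw [show m0 + 2*((t:ℤ)+1) = (m0+2*t) + 2 from by ring, hr]
      rw [div_div_eq_mul_div, div_mul_cancel₀ _ h1]

lemma step_aux (x : ℤ → ℝ)
    (hden : ∀ n : ℤ, 0 ≤ n →
      1 + x (n-1) * x (n-3) * x (n-5) * x (n-7) * x (n-9) ≠ 0)
    (hrec : ∀ n : ℤ, 0 ≤ n →
      x (n + 1) = x (n - 9) / (1 + x (n-1) * x (n-3) * x (n-5) * x (n-7) * x (n-9)))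
    (m0 : ℤ) (h0 : -1 ≤ m0) (t : ℕ) (N : ℤ) (hN8 : N + 8 = m0 + 2*t) (hN : -9 ≤ N) :
    x (N + 10) = x N * ((1 + (t:ℝ) * zf x m0) / (1 + ((t:ℝ)+1) * zf x m0)) := by
  obtain ⟨h1, h2⟩ := zf_closed x hden hrec m0 h0 t
  obtain ⟨h1', _⟩ := zf_closed x hden hrec m0 h0 (t+1)
  push_cast at h1'
  have hr := hrec (N+9) (by omega)
  simp only [show N+9+1 = N+10 from by ring, show N+9-9 = N from by ring,
    show N+9-1 = N+8 from by ring, show N+9-3 = N+6 from by ring,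
    show N+9-5 = N+4 from by ring, show N+9-7 = N+2 from by ring] at hr
  have hz : x (N+8) * x (N+6) * x (N+4) * x (N+2) * x N = zf x (N+8) := by
    unfold zf
    simp only [show N+8-2 = N+6 from by ring, show N+8-4 = N+4 from by ring,
      show N+8-6 = N+2 from by ring, show N+8-8 = N from by ring]
  rw [hz, hN8, h2] at hr
  rw [hr]
  set Q := zf x m0
  rw [show 1 + Q/(1+(t:ℝ)*Q) = (1 + ((t:ℝ)+1)*Q)/(1+(t:ℝ)*Q) from by rw [eq_div_iff h1, add_mul, div_mul_cancel₀ _ h1]; try ring]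
  rw [div_div_eq_mul_div, mul_div_assoc]

theorem stmt17 (x : ℤ → ℝ)
    (hx : ∀ n : ℤ, -9 ≤ n → x n ≠ 0)
    (hden : ∀ n : ℤ, 0 ≤ n →
      1 + x (n-1) * x (n-3) * x (n-5) * x (n-7) * x (n-9) ≠ 0)
    (hrec : ∀ n : ℤ, 0 ≤ n →
      x (n + 1) = x (n - 9) / (1 + x (n-1) * x (n-3) * x (n-5) * x (n-7) * x (n-9)))
    (a : ℕ → ℝ) (ha : ∀ j : ℕ, a j = x (-(j : ℤ)))
    (M : ℕ → ℕ) (hM : ∀ j, M j = 5 - j / 2)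
    (P : ℕ → ℝ)
    (hP : ∀ j, P j = a (j % 2) * a (j % 2 + 2) * a (j % 2 + 4) * a (j % 2 + 6) * a (j % 2 + 8)) :
    ∀ n : ℕ, ∀ j : ℕ, j ≤ 9 →
      x (10 * (n : ℤ) - (j : ℤ)) = a j * ∏ s ∈ Finset.range n,
        (1 + (((5 * s + M j : ℕ) : ℝ) - 1) * P j) /
        (1 + ((5 * s + M j : ℕ) : ℝ) * P j) := by
  intro n
  induction n with
  | zero =>
    intro j hj
    norm_num [ha j]
  | succ n ih =>
    intro j hj
    have ihj := ih j hj
    rw [Finset.prod_range_succ, ← mul_assoc, ← ihj]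
    set t : ℕ := 5*n + 4 - j/2 with ht
    have hMj : M j = 5 - j/2 := hM j
    have htM : 5*n + M j = t + 1 := by omega
    have hcast : ((5*n + M j : ℕ) : ℝ) = (t:ℝ) + 1 := by rw [htM]; push_cast; ring
    rw [hcast]
    -- choose m0 depending on parity
    rcases Nat.mod_two_eq_zero_or_one j with hpar | hpar
    · have hQ : zf x 0 = P j := by
        rw [hP, hpar]
        unfold zf
        rw [ha, ha, ha, ha, ha]
        norm_num
      have hstep := step_aux x hden hrec 0 (by norm_num) t (10*(n:ℤ) - j)
        (by omega) (by omega)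
      rw [hQ] at hstep
      rw [show (10:ℤ) * ((n:ℕ)+1 : ℕ) - (j:ℤ) = (10*(n:ℤ) - j) + 10 from by push_cast; ring]
      rw [hstep]
      ring_nf
    · have hQ : zf x (-1) = P j := by
        rw [hP, hpar]
        unfold zf
        rw [ha, ha, ha, ha, ha]
        norm_num
      have hstep := step_aux x hden hrec (-1) (by norm_num) t (10*(n:ℤ) - j)
        (by omega) (by omega)
      rw [hQ] at hstep
      rw [show (10:ℤ) * ((n:ℕ)+1 : ℕ) - (j:ℤ) = (10*(n:ℤ) - j) + 10 from by push_cast; ring]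
      rw [hstep]
      ring_nf
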